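/- If the argument of latitude ω is uniformly distributed on [0, 2π] and the polar angle of a satellite on an orbit of inclination b is Φ = arccos(sin b · sin ω), then Φ has probability density f_Φ(φ) = sin φ / (π·√(sin²φ − cos²b)) on (π/2 − b, π/2 + b). -/

import Mathlib

open Real MeasureTheory Set Filter Topology

namespace PolarAngleAux

/-- the density function -/
noncomputable def dens (b φ : ℝ) : ℝ :=
  Real.sin φ / (π * Real.sqrt (Real.sin φ ^ 2 - Real.cos b ^ 2))

/-- the CDF on the band -/
noncomputable def G (b x : ℝ) : ℝ :=
  (π - 2 * Real.arcsin (Real.cos x / Real.sin b)) / (2 * π)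

variable {b : ℝ}

lemma sinb_pos (hb : b ∈ Set.Ioo 0 (π / 2)) : 0 < Real.sin b :=
  Real.sin_pos_of_pos_of_lt_pi hb.1 (by linarith [Real.pi_pos, hb.2])

lemma cos_bounds (hb : b ∈ Set.Ioo 0 (π / 2)) {φ : ℝ}
    (hφ : φ ∈ Set.Ioo (π / 2 - b) (π / 2 + b)) :
    -Real.sin b < Real.cos φ ∧ Real.cos φ < Real.sin b := by
  have hπ := Real.pi_pos
  obtain ⟨hb0, hb2⟩ := hb
  obtain ⟨h1, h2⟩ := hφ
  have hmem : φ ∈ Set.Icc 0 π := ⟨by linarith, by linarith⟩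
  constructor
  · have := Real.strictAntiOn_cos hmem
      (show π / 2 + b ∈ Set.Icc 0 π from ⟨by linarith, by linarith⟩) h2
    rwa [show π / 2 + b = b + π / 2 by ring, Real.cos_add_pi_div_two] at this
  · have := Real.strictAntiOn_cos
      (show π / 2 - b ∈ Set.Icc 0 π from ⟨by linarith, by linarith⟩) hmem h1
    rwa [Real.cos_pi_div_two_sub] at this

lemma denom_pos (hb : b ∈ Set.Ioo 0 (π / 2)) {φ : ℝ}
    (hφ : φ ∈ Set.Ioo (π / 2 - b) (π / 2 + b)) :
    0 < Real.sin φ ^ 2 - Real.cos b ^ 2 := by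
  obtain ⟨h1, h2⟩ := cos_bounds hb hφ
  have e1 := Real.sin_sq_add_cos_sq φ
  have e2 := Real.sin_sq_add_cos_sq b
  nlinarith

lemma dens_nonneg {φ : ℝ} (h0 : 0 ≤ φ) (h1 : φ ≤ π) : 0 ≤ dens b φ :=
  div_nonneg (Real.sin_nonneg_of_nonneg_of_le_pi h0 h1)
    (mul_nonneg Real.pi_pos.le (Real.sqrt_nonneg _))

lemma continuousOn_dens (hb : b ∈ Set.Ioo 0 (π / 2)) :
    ContinuousOn (dens b) (Set.Ioo (π / 2 - b) (π / 2 + b)) := by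
  apply ContinuousOn.div Real.continuous_sin.continuousOn
  · exact (continuous_const.mul ((Real.continuous_sin.pow 2 |>.sub
      continuous_const).sqrt)).continuousOn
  · intro φ hφ
    exact ne_of_gt (mul_pos Real.pi_pos (Real.sqrt_pos.2 (denom_pos hb hφ)))

lemma continuous_G (hb : b ∈ Set.Ioo 0 (π / 2)) : Continuous (G b) := by
  unfold G
  exact (continuous_const.sub (continuous_const.mul (Real.continuous_arcsin.comp
    (Real.continuous_cos.div_const _)))).div_const _

lemma G_mem (x : ℝ) : 0 ≤ G b x ∧ G b x ≤ 1 := by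
  have hπ := Real.pi_pos
  unfold G
  have h1 := Real.arcsin_le_pi_div_two (Real.cos x / Real.sin b)
  have h2 := Real.neg_pi_div_two_le_arcsin (Real.cos x / Real.sin b)
  constructor
  · apply div_nonneg (by linarith) (by linarith)
  · rw [div_le_one (by linarith)]; linarith

lemma G_left (hb : b ∈ Set.Ioo 0 (π / 2)) : G b (π / 2 - b) = 0 := by
  have hs := sinb_pos hb
  unfold G
  rw [Real.cos_pi_div_two_sub, div_self hs.ne', Real.arcsin_one]
  ring

lemma G_right (hb : b ∈ Set.Ioo 0 (π / 2)) : G b (π / 2 + b) = 1 := by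
  have hπ := Real.pi_pos
  have hs := sinb_pos hb
  unfold G
  rw [show π / 2 + b = b + π / 2 by ring, Real.cos_add_pi_div_two,
    neg_div, div_self hs.ne', Real.arcsin_neg, Real.arcsin_one]
  field_simp
  ring

lemma hasDerivAt_G (hb : b ∈ Set.Ioo 0 (π / 2)) {φ : ℝ}
    (hφ : φ ∈ Set.Ioo (π / 2 - b) (π / 2 + b)) :
    HasDerivAt (G b) (dens b φ) φ := by
  have hπ := Real.pi_pos
  have hs := sinb_pos hb
  obtain ⟨hc1, hc2⟩ := cos_bounds hb hφ
  set t := Real.cos φ / Real.sin b with htdef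
  have ht1 : -1 < t := by rw [htdef, lt_div_iff₀ hs]; linarith
  have ht2 : t < 1 := by rw [htdef, div_lt_iff₀ hs]; linarith
  have harc : HasDerivAt Real.arcsin (1 / Real.sqrt (1 - t ^ 2)) t :=
    Real.hasDerivAt_arcsin ht1.ne' ht2.ne
  have hcosd : HasDerivAt (fun y => Real.cos y / Real.sin b)
      (-Real.sin φ / Real.sin b) φ := (Real.hasDerivAt_cos φ).div_const _
  have hcomp : HasDerivAt (fun y => Real.arcsin (Real.cos y / Real.sin b))
      (1 / Real.sqrt (1 - t ^ 2) * (-Real.sin φ / Real.sin b)) φ := by have := harc.comp φ hcosd; exact this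
  have hfinal : HasDerivAt (G b)
      ((0 - 2 * (1 / Real.sqrt (1 - t ^ 2) * (-Real.sin φ / Real.sin b))) / (2 * π)) φ :=
    ((hasDerivAt_const φ π).sub (hcomp.const_mul 2)).div_const _
  convert hfinal using 1
  have h1t : 0 < 1 - t ^ 2 := by nlinarith
  have hsq : 0 < Real.sqrt (1 - t ^ 2) := Real.sqrt_pos.2 h1t
  have key : Real.sin b * Real.sqrt (1 - t ^ 2)
      = Real.sqrt (Real.sin φ ^ 2 - Real.cos b ^ 2) := by
    rw [← Real.sqrt_sq hs.le, ← Real.sqrt_mul (sq_nonneg _)]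
    congr 1
    have e1 := Real.sin_sq_add_cos_sq φ
    have e2 := Real.sin_sq_add_cos_sq b
    rw [htdef]
    field_simp
    nlinarith
  unfold dens
  rw [← key]
  field_simp
  ring

lemma ftc_compact (hb : b ∈ Set.Ioo 0 (π / 2)) {u v : ℝ}
    (hu : π / 2 - b < u) (huv : u ≤ v) (hv : v < π / 2 + b) :
    ∫ φ in Set.Ioc u v, dens b φ = G b v - G b u := by
  rw [← intervalIntegral.integral_of_le huv]
  apply intervalIntegral.integral_eq_sub_of_hasDerivAt
  · intro y hy
    rw [Set.uIcc_of_le huv] at hy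
    exact hasDerivAt_G hb ⟨lt_of_lt_of_le hu hy.1, lt_of_le_of_lt hy.2 hv⟩
  · apply ContinuousOn.intervalIntegrable
    rw [Set.uIcc_of_le huv]
    exact (continuousOn_dens hb).mono (fun y hy =>
      ⟨lt_of_lt_of_le hu hy.1, lt_of_le_of_lt hy.2 hv⟩)

lemma integrableOn_dens (hb : b ∈ Set.Ioo 0 (π / 2)) {x : ℝ}
    (hx1 : π / 2 - b < x) (hx2 : x < π / 2 + b) :
    IntegrableOn (dens b) (Set.Ioc (π / 2 - b) x) := by
  have hπ := Real.pi_pos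
  obtain ⟨hb0, hb2⟩ := hb
  set a := π / 2 - b with hadef
  set c : ℕ → ℝ := fun n => a + (x - a) * (1 / (n + 1)) with hcdef
  have hca : ∀ n : ℕ, a < c n := by
    intro n
    have h1 : (0:ℝ) < 1 / (n + 1) := by positivity
    have : 0 < (x - a) * (1 / (n + 1)) := mul_pos (by linarith) h1
    simp only [hcdef]; linarith
  have hcx : ∀ n : ℕ, c n ≤ x := by
    intro n
    have h1 : (1:ℝ) / (n + 1) ≤ 1 := by
      rw [div_le_one (by positivity)]
      simp
    have h2 : (x - a) * (1 / (n + 1)) ≤ (x - a) * 1 :=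
      mul_le_mul_of_nonneg_left h1 (by linarith)
    simp only [hcdef]; linarith
  have hsub : ∀ n : ℕ, Set.Icc (c n) x ⊆ Set.Ioo (π / 2 - b) (π / 2 + b) := by
    intro n y hy
    exact ⟨lt_of_lt_of_le (hca n) hy.1, lt_of_le_of_lt hy.2 hx2⟩
  have hfi : ∀ n : ℕ, IntegrableOn (dens b) (Set.Ioc (c n) x) := by
    intro n
    exact (((continuousOn_dens ⟨hb0, hb2⟩).mono (hsub n)).integrableOn_Icc).mono_set
      Set.Ioc_subset_Icc_self
  apply MeasureTheory.integrableOn_Ioc_of_intervalIntegral_norm_bounded_left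
    (I := 1) (l := atTop) hfi
  · have h0 : Tendsto (fun n : ℕ => (1:ℝ) / (n + 1)) atTop (𝓝 0) :=
      tendsto_one_div_add_atTop_nhds_zero_nat
    have h1 := h0.const_mul (x - a)
    have h2 := (tendsto_const_nhds : Filter.Tendsto (fun _ : ℕ => a) atTop (𝓝 a)).add h1
    rw [hcdef]
    simpa using h2
  · apply Filter.Eventually.of_forall
    intro n
    have hnorm : ∫ φ in Set.Ioc (c n) x, ‖dens b φ‖ = ∫ φ in Set.Ioc (c n) x, dens b φ := by
      apply setIntegral_congr_fun measurableSet_Ioc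
      intro φ hφ
      have hφ' := hsub n ⟨hφ.1.le, hφ.2⟩
      exact Real.norm_of_nonneg (dens_nonneg (by linarith [hφ'.1]) (by linarith [hφ'.2]))
    rw [hnorm, ftc_compact ⟨hb0, hb2⟩ (hca n) (hcx n) hx2]
    have g1 := G_mem (b := b) x
    have g2 := G_mem (b := b) (c n)
    linarith [g1.2, g2.1]

lemma integral_dens_eq (hb : b ∈ Set.Ioo 0 (π / 2)) {x : ℝ}
    (hx1 : π / 2 - b < x) (hx2 : x < π / 2 + b) :
    ∫ φ in Set.Ioc (π / 2 - b) x, dens b φ = G b x := by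
  have hcont : ContinuousOn (G b) (Set.Icc (π / 2 - b) x) := (continuous_G hb).continuousOn
  have hint : IntervalIntegrable (dens b) volume (π / 2 - b) x := by
    rw [intervalIntegrable_iff, Set.uIoc_of_le hx1.le]
    exact integrableOn_dens hb hx1 hx2
  have := intervalIntegral.integral_eq_sub_of_hasDeriv_right_of_le hx1.le hcont
    (fun y hy => (hasDerivAt_G hb ⟨hy.1, lt_trans hy.2 hx2⟩).hasDerivWithinAt) hint
  rw [← intervalIntegral.integral_of_le hx1.le, this, G_left hb, sub_zero]

/-- the sublevel set of sin on the shifted period -/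
lemma sin_level {t : ℝ} (ht : t ∈ Set.Icc (-1 : ℝ) 1) :
    {ω : ℝ | t ≤ Real.sin ω} ∩ Set.Icc (-(π / 2)) (3 * π / 2)
      = Set.Icc (Real.arcsin t) (π - Real.arcsin t) := by
  have hπ := Real.pi_pos
  have ha1 := Real.neg_pi_div_two_le_arcsin t
  have ha2 := Real.arcsin_le_pi_div_two t
  ext ω
  simp only [Set.mem_inter_iff, Set.mem_setOf_eq, Set.mem_Icc]
  constructor
  · rintro ⟨hts, h1, h2⟩
    rcases le_or_gt ω (π / 2) with hω | hω
    · have harc : Real.arcsin t ≤ ω := by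
        have := Real.monotone_arcsin hts
        rwa [Real.arcsin_sin h1 hω] at this
      exact ⟨harc, by linarith⟩
    · have h1' : -(π / 2) ≤ π - ω := by linarith
      have h2' : π - ω ≤ π / 2 := by linarith
      have harc : Real.arcsin t ≤ π - ω := by
        have hts' : t ≤ Real.sin (π - ω) := by rwa [Real.sin_pi_sub]
        have := Real.monotone_arcsin hts'
        rwa [Real.arcsin_sin h1' h2'] at this
      exact ⟨by linarith, by linarith⟩
  · rintro ⟨h1, h2⟩
    refine ⟨?_, by linarith, by linarith⟩
    rcases le_or_gt ω (π / 2) with hω | hω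
    · calc t = Real.sin (Real.arcsin t) := (Real.sin_arcsin ht.1 ht.2).symm
        _ ≤ Real.sin ω := Real.strictMonoOn_sin.monotoneOn ⟨ha1, ha2⟩ ⟨by linarith, hω⟩ h1
    · rw [← Real.sin_pi_sub]
      calc t = Real.sin (Real.arcsin t) := (Real.sin_arcsin ht.1 ht.2).symm
        _ ≤ Real.sin (π - ω) := Real.strictMonoOn_sin.monotoneOn ⟨ha1, ha2⟩
            ⟨by linarith, by linarith⟩ (by linarith)

lemma arccos_le_iff (hb : b ∈ Set.Ioo 0 (π / 2)) {x : ℝ}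
    (hx1 : π / 2 - b ≤ x) (hx2 : x ≤ π / 2 + b) (ω : ℝ) :
    Real.arccos (Real.sin b * Real.sin ω) ≤ x
      ↔ Real.cos x / Real.sin b ≤ Real.sin ω := by
  have hπ := Real.pi_pos
  obtain ⟨hb0, hb2⟩ := hb
  have hs : 0 < Real.sin b := sinb_pos ⟨hb0, hb2⟩
  have hsin1 := Real.neg_one_le_sin ω
  have hsin2 := Real.sin_le_one ω
  have hsb1 := Real.sin_le_one b
  have hy1 : -1 ≤ Real.sin b * Real.sin ω := by nlinarith
  have hy2 : Real.sin b * Real.sin ω ≤ 1 := by nlinarith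
  have hmem : π / 2 - x ∈ Set.Icc (-(π / 2)) (π / 2) := ⟨by linarith, by linarith⟩
  rw [Real.arccos_eq_pi_div_two_sub_arcsin, sub_le_iff_le_add, ← sub_le_iff_le_add']
  rw [Real.le_arcsin_iff_sin_le hmem ⟨hy1, hy2⟩, Real.sin_pi_div_two_sub]
  rw [div_le_iff₀ hs]
  constructor <;> intro h <;> nlinarith

/-- shift the fundamental period -/
lemma shift_lemma (T : Set ℝ) (hT : MeasurableSet T)
    (hper : ∀ ω : ℝ, ω + 2 * π ∈ T ↔ ω ∈ T) :
    volume (T ∩ Set.Icc 0 (2 * π)) = volume (T ∩ Set.Icc (-(π / 2)) (3 * π / 2)) := by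
  have hπ := Real.pi_pos
  have hpoint : ∀ (u v w : ℝ), u ≤ v → volume (T ∩ Set.Icc u v)
      = volume (T ∩ Set.Ioc u v) + volume (T ∩ {u}) := by
    intro u v w huv
    rw [← measure_union _ (hT.inter (measurableSet_singleton u)),
      ← Set.inter_union_distrib_left]
    · congr 2
      ext y
      simp only [Set.mem_union, Set.mem_Ioc, Set.mem_Icc, Set.mem_singleton_iff]
      constructor
      · rintro ⟨h0, h2⟩
        rcases eq_or_lt_of_le h0 with h | h
        · exact Or.inr h.symm
        · exact Or.inl ⟨h, h2⟩
      · rintro (⟨h, h'⟩ | rfl)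
        · exact ⟨h.le, h'⟩
        · exact ⟨le_rfl, huv⟩
    · exact (Set.disjoint_left.2 fun y hy hy' => by
        simp only [Set.mem_inter_iff, Set.mem_Ioc] at hy
        simp only [Set.mem_inter_iff, Set.mem_singleton_iff] at hy'
        exact absurd hy'.2 (ne_of_gt hy.2.1))
  have hnull : ∀ u : ℝ, volume (T ∩ {u}) = 0 :=
    fun u => measure_mono_null Set.inter_subset_right Real.volume_singleton
  have hIcc1 : volume (T ∩ Set.Icc 0 (2 * π)) = volume (T ∩ Set.Ioc 0 (2 * π)) := by
    rw [hpoint 0 (2 * π) 0 (by linarith), hnull, add_zero]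
  have hIcc2 : volume (T ∩ Set.Icc (-(π / 2)) (3 * π / 2))
      = volume (T ∩ Set.Ioc (-(π / 2)) (3 * π / 2)) := by
    rw [hpoint (-(π / 2)) (3 * π / 2) 0 (by linarith), hnull, add_zero]
  have hsplit : ∀ (u v w : ℝ), u ≤ v → v ≤ w → volume (T ∩ Set.Ioc u w)
      = volume (T ∩ Set.Ioc u v) + volume (T ∩ Set.Ioc v w) := by
    intro u v w huv hvw
    rw [← measure_union _ (hT.inter measurableSet_Ioc), ← Set.inter_union_distrib_left,
      Set.Ioc_union_Ioc_eq_Ioc huv hvw]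
    exact (Set.Ioc_disjoint_Ioc_of_le le_rfl).mono Set.inter_subset_right
      Set.inter_subset_right
  have htrans : volume (T ∩ Set.Ioc (-(π / 2)) 0) = volume (T ∩ Set.Ioc (3 * π / 2) (2 * π)) := by
    have hset : T ∩ Set.Ioc (-(π / 2)) 0
        = (fun ω => ω + 2 * π) ⁻¹' (T ∩ Set.Ioc (3 * π / 2) (2 * π)) := by
      ext ω
      simp only [Set.mem_inter_iff, Set.mem_preimage, Set.mem_Ioc]
      rw [hper ω]
      constructor <;> rintro ⟨h1, h2, h3⟩ <;> exact ⟨h1, by linarith, by linarith⟩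
    rw [hset, measure_preimage_add_right]
  rw [hIcc1, hIcc2, hsplit 0 (3 * π / 2) (2 * π) (by linarith) (by linarith),
    hsplit (-(π / 2)) 0 (3 * π / 2) (by linarith) (by linarith), htrans, add_comm]

/-- the measure of the sublevel set of the polar angle over one period -/
lemma level_measure (hb : b ∈ Set.Ioo 0 (π / 2)) {x : ℝ}
    (hx1 : π / 2 - b ≤ x) (hx2 : x ≤ π / 2 + b) :
    volume ({ω : ℝ | Real.arccos (Real.sin b * Real.sin ω) ≤ x} ∩ Set.Icc 0 (2 * π))
      = ENNReal.ofReal (π - 2 * Real.arcsin (Real.cos x / Real.sin b)) := by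
  have hπ := Real.pi_pos
  obtain ⟨hb0, hb2⟩ := hb
  have hs : 0 < Real.sin b := sinb_pos ⟨hb0, hb2⟩
  have hT : MeasurableSet {ω : ℝ | Real.arccos (Real.sin b * Real.sin ω) ≤ x} := by
    have : Continuous (fun ω : ℝ => Real.arccos (Real.sin b * Real.sin ω)) :=
      Real.continuous_arccos.comp (continuous_const.mul Real.continuous_sin)
    exact measurableSet_le this.measurable measurable_const
  rw [shift_lemma _ hT (fun ω => by
    simp only [Set.mem_setOf_eq, Real.sin_add_two_pi])]
  have hTeq : {ω : ℝ | Real.arccos (Real.sin b * Real.sin ω) ≤ x}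
      = {ω : ℝ | Real.cos x / Real.sin b ≤ Real.sin ω} := by
    ext ω
    exact arccos_le_iff ⟨hb0, hb2⟩ hx1 hx2 ω
  have hcx1 : Real.cos x ≤ Real.sin b := by
    have := Real.strictAntiOn_cos.antitoneOn
      (show π / 2 - b ∈ Set.Icc 0 π from ⟨by linarith, by linarith⟩)
      (show x ∈ Set.Icc 0 π from ⟨by linarith, by linarith⟩) hx1
    rwa [Real.cos_pi_div_two_sub] at this
  have hcx2 : -Real.sin b ≤ Real.cos x := by
    have := Real.strictAntiOn_cos.antitoneOn
      (show x ∈ Set.Icc 0 π from ⟨by linarith, by linarith⟩)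
      (show π / 2 + b ∈ Set.Icc 0 π from ⟨by linarith, by linarith⟩) hx2
    rwa [show π / 2 + b = b + π / 2 by ring, Real.cos_add_pi_div_two] at this
  have ht : Real.cos x / Real.sin b ∈ Set.Icc (-1 : ℝ) 1 := by
    constructor
    · rw [le_div_iff₀ hs]; linarith
    · rw [div_le_one hs]; linarith
  rw [hTeq, sin_level ht, Real.volume_Icc]
  congr 1
  ring

end PolarAngleAux

open PolarAngleAux

theorem polar_angle_density_from_uniform_argument_of_latitude
    (b : ℝ) (hb : b ∈ Set.Ioo 0 (π / 2)) :
    Measure.map (fun ω : ℝ => Real.arccos (Real.sin b * Real.sin ω))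
        ((ENNReal.ofReal (2 * π))⁻¹ • volume.restrict (Set.Icc 0 (2 * π)))
      = volume.withDensity (fun φ => ENNReal.ofReal
          (Set.indicator (Set.Ioo (π / 2 - b) (π / 2 + b))
            (fun φ => Real.sin φ / (π * Real.sqrt (Real.sin φ ^ 2 - Real.cos b ^ 2))) φ)) := by
  have hπ := Real.pi_pos
  obtain ⟨hb0, hb2⟩ := hb
  have hb' : b ∈ Set.Ioo 0 (π / 2) := ⟨hb0, hb2⟩
  have hs : 0 < Real.sin b := sinb_pos hb'
  have h2π : (0:ℝ) < 2 * π := by linarith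
  set f : ℝ → ℝ := fun ω => Real.arccos (Real.sin b * Real.sin ω) with hfdef
  have hmeas : Measurable f :=
    (Real.continuous_arccos.comp (continuous_const.mul Real.continuous_sin)).measurable
  set μ : Measure ℝ := (ENNReal.ofReal (2 * π))⁻¹ • volume.restrict (Set.Icc 0 (2 * π)) with hμdef
  set B : Set ℝ := Set.Ioo (π / 2 - b) (π / 2 + b) with hBdef
  set ν : Measure ℝ := volume.withDensity (fun φ => ENNReal.ofReal
      (Set.indicator B (fun φ => Real.sin φ / (π * Real.sqrt (Real.sin φ ^ 2 - Real.cos b ^ 2))) φ))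
    with hνdef
  -- rewrite ν
  have hind : (fun φ => ENNReal.ofReal (Set.indicator B
        (fun φ => Real.sin φ / (π * Real.sqrt (Real.sin φ ^ 2 - Real.cos b ^ 2))) φ))
      = Set.indicator B (fun φ => ENNReal.ofReal (dens b φ)) := by
    funext φ
    by_cases hφ : φ ∈ B <;> simp [hφ, dens]
  have hνapp : ∀ s : Set ℝ, MeasurableSet s →
      ν s = ∫⁻ φ in s ∩ B, ENNReal.ofReal (dens b φ) := by
    intro s hsm
    rw [hνdef, hind, withDensity_indicator measurableSet_Ioo, withDensity_apply _ hsm,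
      Measure.restrict_restrict hsm]
  -- the map applied to Iic
  have hmap : ∀ x : ℝ, (Measure.map f μ) (Set.Iic x)
      = (ENNReal.ofReal (2 * π))⁻¹ * volume (f ⁻¹' Set.Iic x ∩ Set.Icc 0 (2 * π)) := by
    intro x
    rw [Measure.map_apply hmeas measurableSet_Iic, hμdef, Measure.smul_apply,
      Measure.restrict_apply (hmeas measurableSet_Iic), smul_eq_mul]
  -- ν of Iic in the main range
  have hν_Iic : ∀ x : ℝ, π / 2 - b ≤ x → x < π / 2 + b →
      ν (Set.Iic x) = ENNReal.ofReal (G b x) := by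
    intro x hx1 hx2
    rw [hνapp _ measurableSet_Iic]
    rcases eq_or_lt_of_le hx1 with heq | hlt
    · have hempty : Set.Iic x ∩ B = ∅ := by
        ext y
        simp only [Set.mem_inter_iff, Set.mem_Iic, Set.mem_empty_iff_false, iff_false,
          hBdef, Set.mem_Ioo, not_and]
        intro hy h1 h2
        rw [← heq] at hy
        linarith
      rw [hempty, ← heq, G_left hb']
      simp
    · have hinter : Set.Iic x ∩ B = Set.Ioc (π / 2 - b) x := by
        ext y
        simp only [Set.mem_inter_iff, Set.mem_Iic, hBdef, Set.mem_Ioo, Set.mem_Ioc]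
        constructor
        · rintro ⟨h1, h2, h3⟩; exact ⟨h2, h1⟩
        · rintro ⟨h1, h2⟩; exact ⟨h2, h1, by linarith⟩
      rw [hinter, ← MeasureTheory.ofReal_integral_eq_lintegral_ofReal
        (integrableOn_dens hb' hlt hx2)
        ((ae_restrict_iff' measurableSet_Ioc).2 (Filter.Eventually.of_forall
          (fun φ hφ => dens_nonneg (by linarith [hφ.1]) (by linarith [hφ.2]))))]
      rw [integral_dens_eq hb' hlt hx2]
  -- finiteness of the mapped measure
  have hμuniv : μ Set.univ = 1 := by
    rw [hμdef, Measure.smul_apply, Measure.restrict_apply MeasurableSet.univ,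
      Set.univ_inter, Real.volume_Icc, smul_eq_mul, show (2 * π - 0) = 2 * π by ring]
    exact ENNReal.inv_mul_cancel (by simp [ENNReal.ofReal_pos.2 h2π, (ENNReal.ofReal_pos.2 h2π).ne', hπ])
      ENNReal.ofReal_ne_top
  haveI : IsFiniteMeasure (Measure.map f μ) := by
    constructor
    rw [Measure.map_apply hmeas MeasurableSet.univ, Set.preimage_univ, hμuniv]
    exact ENNReal.one_lt_top
  refine Measure.ext_of_Iic _ _ (fun x => ?_)
  show (Measure.map f μ) (Set.Iic x) = ν (Set.Iic x)
  rcases lt_or_ge x (π / 2 - b) with hx | hx1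
  · -- below the band : both are zero
    have hempty : f ⁻¹' Set.Iic x = ∅ := by
      ext ω
      simp only [Set.mem_preimage, Set.mem_Iic, Set.mem_empty_iff_false, iff_false, not_le, hfdef]
      have harc : Real.arcsin (Real.sin b * Real.sin ω) ≤ b := by
        have hmono := Real.monotone_arcsin
          (show Real.sin b * Real.sin ω ≤ Real.sin b by nlinarith [Real.sin_le_one ω])
        rwa [Real.arcsin_sin (by linarith) (by linarith)] at hmono
      rw [Real.arccos_eq_pi_div_two_sub_arcsin]
      linarith
    rw [hmap, hempty, Set.empty_inter, measure_empty, mul_zero]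
    rw [hνapp _ measurableSet_Iic]
    have hempty2 : Set.Iic x ∩ B = ∅ := by
      ext y
      simp only [Set.mem_inter_iff, Set.mem_Iic, Set.mem_empty_iff_false, iff_false,
        hBdef, Set.mem_Ioo, not_and]
      intro hy h1 h2
      linarith
    rw [hempty2]
    simp
  rcases lt_or_ge x (π / 2 + b) with hx2 | hx2
  · -- the main range
    rw [hmap, hν_Iic x hx1 hx2]
    have hpre : f ⁻¹' Set.Iic x = {ω : ℝ | Real.arccos (Real.sin b * Real.sin ω) ≤ x} := rfl
    rw [hpre, level_measure hb' hx1 hx2.le]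
    rw [show G b x = (π - 2 * Real.arcsin (Real.cos x / Real.sin b)) / (2 * π) from rfl,
      ENNReal.ofReal_div_of_pos h2π, ENNReal.div_eq_inv_mul]
  · -- above the band : both are one
    have hpre : f ⁻¹' Set.Iic x = Set.univ := by
      ext ω
      simp only [Set.mem_preimage, Set.mem_Iic, Set.mem_univ, iff_true, hfdef]
      have harc : -b ≤ Real.arcsin (Real.sin b * Real.sin ω) := by
        have hmono := Real.monotone_arcsin
          (show -Real.sin b ≤ Real.sin b * Real.sin ω by nlinarith [Real.neg_one_le_sin ω])
        rwa [Real.arcsin_neg, Real.arcsin_sin (by linarith) (by linarith)] at hmono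
      rw [Real.arccos_eq_pi_div_two_sub_arcsin]
      linarith
    have hLHS : (Measure.map f μ) (Set.Iic x) = 1 := by
      rw [Measure.map_apply hmeas measurableSet_Iic, hpre, hμuniv]
    rw [hLHS]
    -- now compute ν (Iic x) = 1 by a limiting argument
    set c : ℕ → ℝ := fun n => π / 2 + b - b * (1 / (n + 1)) with hcdef
    have hc_lt : ∀ n : ℕ, c n < π / 2 + b := by
      intro n
      have : (0:ℝ) < b * (1 / (n + 1)) := by positivity
      simp only [hcdef]; linarith
    have hc_ge : ∀ n : ℕ, π / 2 - b ≤ c n := by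
      intro n
      have h1 : (1:ℝ) / (n + 1) ≤ 1 := by
        rw [div_le_one (by positivity)]; simp
      have h2 : b * (1 / (n + 1)) ≤ b * 1 := mul_le_mul_of_nonneg_left h1 (by linarith)
      simp only [hcdef]; linarith
    have hmono : Monotone (fun n : ℕ => Set.Iic (c n)) := by
      intro n m hnm
      apply Set.Iic_subset_Iic.2
      have h1 : (1:ℝ) / (m + 1) ≤ 1 / (n + 1) := by
        apply div_le_div_of_nonneg_left one_pos.le (by positivity)
        exact_mod_cast Nat.succ_le_succ hnm
      have h2 : b * (1 / (m + 1)) ≤ b * (1 / (n + 1)) :=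
        mul_le_mul_of_nonneg_left h1 (by linarith)
      simp only [hcdef]; linarith
    have hU : (⋃ n : ℕ, Set.Iic (c n)) = Set.Iio (π / 2 + b) := by
      ext y
      simp only [Set.mem_iUnion, Set.mem_Iic, Set.mem_Iio]
      constructor
      · rintro ⟨n, hn⟩
        exact lt_of_le_of_lt hn (hc_lt n)
      · intro hy
        obtain ⟨n, hn⟩ := exists_nat_one_div_lt
          (show (0:ℝ) < (π / 2 + b - y) / b from div_pos (by linarith) hb0)
        refine ⟨n, ?_⟩
        rw [lt_div_iff₀ hb0] at hn
        simp only [hcdef]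
        nlinarith
    have htend := tendsto_measure_iUnion_atTop (μ := ν) hmono
    rw [hU] at htend
    have heq : ∀ n : ℕ, ν (Set.Iic (c n)) = ENNReal.ofReal (G b (c n)) :=
      fun n => hν_Iic (c n) (hc_ge n) (hc_lt n)
    have hc_tend : Tendsto c atTop (𝓝 (π / 2 + b)) := by
      have h0 : Tendsto (fun n : ℕ => (1:ℝ) / (n + 1)) atTop (𝓝 0) :=
        tendsto_one_div_add_atTop_nhds_zero_nat
      have h1 := h0.const_mul b
      have h2 := (tendsto_const_nhds : Filter.Tendsto (fun _ : ℕ => π / 2 + b) atTop (𝓝 (π / 2 + b))).sub h1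
      rw [hcdef]
      simpa using h2
    have htend2 : Tendsto (fun n : ℕ => ν (Set.Iic (c n))) atTop (𝓝 (ENNReal.ofReal 1)) := by
      have : Tendsto (fun n : ℕ => ENNReal.ofReal (G b (c n))) atTop (𝓝 (ENNReal.ofReal 1)) := by
        apply (ENNReal.continuous_ofReal.tendsto 1).comp
        have := ((continuous_G hb').tendsto (π / 2 + b)).comp hc_tend
        rwa [G_right hb'] at this
      exact this.congr (fun n => (heq n).symm)
    have hνIio : ν (Set.Iio (π / 2 + b)) = 1 := by
      have := tendsto_nhds_unique htend htend2
      rw [this, ENNReal.ofReal_one]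
    have hdecomp : Set.Iic x = Set.Iio (π / 2 + b) ∪ Set.Icc (π / 2 + b) x := by
      ext y
      simp only [Set.mem_Iic, Set.mem_union, Set.mem_Iio, Set.mem_Icc]
      constructor
      · intro hy
        rcases lt_or_ge y (π / 2 + b) with h | h
        · exact Or.inl h
        · exact Or.inr ⟨h, hy⟩
      · rintro (h | ⟨h1, h2⟩)
        · linarith
        · exact h2
    have hν0 : ν (Set.Icc (π / 2 + b) x) = 0 := by
      rw [hνapp _ measurableSet_Icc]
      have hempty : Set.Icc (π / 2 + b) x ∩ B = ∅ := by
        ext y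
        simp only [Set.mem_inter_iff, Set.mem_Icc, Set.mem_empty_iff_false, iff_false,
          hBdef, Set.mem_Ioo, not_and]
        rintro ⟨h1, h2⟩ h3 h4
        linarith
      rw [hempty]
      simp
    rw [hdecomp, measure_union _ measurableSet_Icc, hνIio, hν0, add_zero]
    exact Set.disjoint_left.2 fun y hy hy' => absurd hy'.1 (not_le.2 hy)
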